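/- Let n = 2m and suppose φ is an automorphism of the Grassmannian Gr_m(V), dim V = 2m, induced by an isomorphism ψ : V* → V (i.e., φ(H) = ψ(H^⊥)), and suppose φ is an involution on Gr_m(V). Then the matrix A = ψ ∘ χ (with χ defined by u(χ(v)) = v(ψ⁻¹(u))) is a scalar c·I with c² = 1, and the bilinear form ⟨u,v⟩ = u(ψ⁻¹(v)) on V is symmetric if c = 1 and alternating (symplectic) if c = -1. -/

import Mathlib

open Module Submodule

-- extend a submodule to a given finrank
lemma aux_exists_superset {V : Type*} [AddCommGroup V] [Module ℂ V] [FiniteDimensional ℂ V]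
    (N : Submodule ℂ V) (k : ℕ) (h1 : finrank ℂ N ≤ k) (h2 : k ≤ finrank ℂ V) :
    ∃ H : Submodule ℂ V, N ≤ H ∧ finrank ℂ H = k := by
  induction k with
  | zero =>
    have : finrank ℂ N = 0 := Nat.le_zero.mp h1
    exact ⟨N, le_rfl, this⟩
  | succ k ih =>
    rcases Nat.lt_or_ge (finrank ℂ N) (k+1) with hlt | hge
    · obtain ⟨H, hNH, hH⟩ := ih (Nat.lt_succ_iff.mp hlt) (le_trans (Nat.le_succ k) h2)
      have hHV : finrank ℂ H < finrank ℂ V := by omega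
      obtain ⟨v, hv⟩ := H.exists_of_finrank_lt hHV
      have hv1 : v ∉ H := by simpa using hv 1 one_ne_zero
      refine ⟨H ⊔ ℂ ∙ v, le_trans hNH le_sup_left, ?_⟩
      have hv0 : v ≠ 0 := fun h => hv1 (h ▸ H.zero_mem)
      have hinf : H ⊓ (ℂ ∙ v) = ⊥ := by
        rw [eq_bot_iff]
        rintro x ⟨hxH, hxv⟩
        obtain ⟨c, rfl⟩ := mem_span_singleton.mp hxv
        rcases eq_or_ne c 0 with rfl | hc
        · simp
        · exact absurd hxH (hv c hc)
      have := Submodule.finrank_sup_add_finrank_inf_eq H (ℂ ∙ v)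
      rw [hinf, finrank_bot, finrank_span_singleton hv0] at this
      omega
    · exact ⟨N, le_rfl, le_antisymm h1 hge⟩

lemma aux_two_subspaces {V : Type*} [AddCommGroup V] [Module ℂ V] [FiniteDimensional ℂ V]
    (m : ℕ) (hm : 0 < m) (hV : finrank ℂ V = 2 * m) {v : V} (hv0 : v ≠ 0) :
    ∃ H₁ H₂ : Submodule ℂ V, finrank ℂ H₁ = m ∧ finrank ℂ H₂ = m ∧
      v ∈ H₁ ∧ v ∈ H₂ ∧ H₁ ⊓ H₂ = ℂ ∙ v := by
  obtain ⟨H₁, hle, hH₁⟩ := aux_exists_superset (ℂ ∙ v) m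
    (by rw [finrank_span_singleton hv0]; omega) (by omega)
  have hvH₁ : v ∈ H₁ := hle (Submodule.mem_span_singleton_self v)
  -- build K with finrank K = 1 + i, v ∈ K, K ⊓ H₁ = span v, for all 1 + i ≤ m
  have key : ∀ i : ℕ, 1 + i ≤ m → ∃ K : Submodule ℂ V,
      finrank ℂ K = 1 + i ∧ v ∈ K ∧ K ⊓ H₁ = ℂ ∙ v := by
    intro i
    induction i with
    | zero =>
      intro _
      exact ⟨ℂ ∙ v, by rw [finrank_span_singleton hv0],
        Submodule.mem_span_singleton_self v,
        inf_eq_left.mpr hle⟩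
    | succ i ih =>
      intro hi
      obtain ⟨K, hK, hvK, hKinf⟩ := ih (by omega)
      have hbig : finrank ℂ (H₁ ⊔ K : Submodule ℂ V) < finrank ℂ V := by
        have h1 := Submodule.finrank_sup_add_finrank_inf_eq H₁ K
        omega
      obtain ⟨w, hw⟩ := (H₁ ⊔ K).exists_of_finrank_lt hbig
      have hw1 : w ∉ H₁ ⊔ K := by simpa using hw 1 one_ne_zero
      have hw0 : w ≠ 0 := fun h => hw1 (h ▸ Submodule.zero_mem _)
      refine ⟨K ⊔ ℂ ∙ w, ?_, Submodule.mem_sup_left hvK, ?_⟩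
      · have hinf : K ⊓ (ℂ ∙ w) = ⊥ := by
          rw [eq_bot_iff]
          rintro x ⟨hxK, hxw⟩
          obtain ⟨c, rfl⟩ := Submodule.mem_span_singleton.mp hxw
          rcases eq_or_ne c 0 with rfl | hc
          · simp
          · exact absurd (Submodule.mem_sup_right hxK : c • w ∈ H₁ ⊔ K) (hw c hc)
        have := Submodule.finrank_sup_add_finrank_inf_eq K (ℂ ∙ w)
        rw [hinf, finrank_bot, finrank_span_singleton hw0] at this
        omega
      · apply le_antisymm
        · rintro x hx
          rw [Submodule.mem_inf, Submodule.mem_sup] at hx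
          obtain ⟨⟨y, hy, z, hz, rfl⟩, hxH⟩ := hx
          obtain ⟨c, rfl⟩ := Submodule.mem_span_singleton.mp hz
          rcases eq_or_ne c 0 with rfl | hc
          · rw [← hKinf]; exact ⟨by simpa using hy, by simpa using hxH⟩
          · exfalso
            apply hw c hc
            have hcw : c • w = (y + c • w) - y := by abel
            rw [hcw]
            exact Submodule.sub_mem _ (Submodule.mem_sup_left hxH)
              (Submodule.mem_sup_right hy)
        · refine le_inf (le_trans ?_ le_sup_left) hle
          exact Submodule.span_le.mpr (by simpa using hvK)
  obtain ⟨K, hK, hvK, hKinf⟩ := key (m - 1) (by omega)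
  refine ⟨H₁, K, hH₁, by rw [hK]; omega, hvH₁, hvK, by rw [inf_comm, hKinf]⟩



/-- Let `dim V = 2m` and let `φ` be the automorphism of the Grassmannian
`Gr_m(V)` induced by an isomorphism `ψ : V* → V`, i.e. `φ(H) = ψ(H^⊥)`; suppose `φ` is an
involution on `Gr_m(V)`.  With `χ : V → V*` defined by `u(χ(v)) = v(ψ⁻¹(u))` and
`A = ψ ∘ χ`, the map `A` is a scalar `c • I` with `c² = 1`, and the bilinear form
`⟨u,v⟩ = u(ψ⁻¹(v))` on `V` is symmetric if `c = 1` and alternating if `c = -1`. -/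
theorem stmt17 {V : Type*} [AddCommGroup V] [Module ℂ V] [FiniteDimensional ℂ V]
    (m : ℕ) (hm : 0 < m) (hV : Module.finrank ℂ V = 2 * m)
    (ψ : Module.Dual ℂ V ≃ₗ[ℂ] V)
    (χ : V →ₗ[ℂ] Module.Dual ℂ V)
    (hχ : ∀ u v : V, χ v u = ψ.symm u v)
    (hinv : ∀ H : Submodule ℂ V, Module.finrank ℂ H = m →
      (((H.dualAnnihilator.map (ψ : Module.Dual ℂ V →ₗ[ℂ] V)).dualAnnihilator).map
        (ψ : Module.Dual ℂ V →ₗ[ℂ] V)) = H) :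
    ∃ c : ℂ, (∀ v : V, ψ (χ v) = c • v) ∧ c ^ 2 = 1 ∧
      (c = 1 → ∀ u v : V, ψ.symm v u = ψ.symm u v) ∧
      (c = -1 → ∀ u v : V, ψ.symm v u = - ψ.symm u v) := by
  -- χ is injective, hence bijective
  have hχinj : Function.Injective χ := by
    rw [← LinearMap.ker_eq_bot, eq_bot_iff]
    intro v hv
    rw [LinearMap.mem_ker] at hv
    rw [Submodule.mem_bot]
    rw [← Module.forall_dual_apply_eq_zero_iff (R := ℂ)]
    intro f
    have := hχ (ψ f) v
    rw [hv] at this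
    simpa using this.symm
  have hχsurj : Function.Surjective χ :=
    (LinearMap.injective_iff_surjective_of_finrank_eq_finrank
      (Subspace.dual_finrank_eq (K := ℂ) (V := V)).symm).mp hχinj
  let χe : V ≃ₗ[ℂ] Module.Dual ℂ V := LinearEquiv.ofBijective χ ⟨hχinj, hχsurj⟩
  -- A maps every m-dimensional subspace onto itself
  have hmap : ∀ H : Submodule ℂ V, Module.finrank ℂ H = m →
      H.map ((ψ : Module.Dual ℂ V →ₗ[ℂ] V) ∘ₗ χ) = H := by
    intro H hH
    have hle : H.map χ ≤ ((H.dualAnnihilator).map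
        (ψ : Module.Dual ℂ V →ₗ[ℂ] V)).dualAnnihilator := by
      rintro _ ⟨v, hv, rfl⟩
      rw [Submodule.mem_dualAnnihilator]
      rintro _ ⟨f, hf, rfl⟩
      rw [hχ]
      simpa using ((Submodule.mem_dualAnnihilator _).mp hf) v hv
    have hfr1 : Module.finrank ℂ (H.map χ) = m := by
      have : H.map χ = H.map (χe : V →ₗ[ℂ] Module.Dual ℂ V) := rfl
      rw [this, LinearEquiv.finrank_map_eq, hH]
    have hfr2 : Module.finrank ℂ
        (((H.dualAnnihilator).map (ψ : Module.Dual ℂ V →ₗ[ℂ] V)).dualAnnihilator) = m := by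
      have e1 : Module.finrank ℂ ((H.dualAnnihilator).map (ψ : Module.Dual ℂ V →ₗ[ℂ] V))
          = Module.finrank ℂ H.dualAnnihilator := LinearEquiv.finrank_map_eq ψ _
      have e2 : Module.finrank ℂ H.dualAnnihilator = m := by
        have := (Subspace.quotEquivAnnihilator H).finrank_eq
        have h3 := Submodule.finrank_quotient_add_finrank H
        omega
      have e4 : Module.finrank ℂ (Module.Dual ℂ V) = 2 * m := by
        rw [Subspace.dual_finrank_eq, hV]
      have := (Subspace.quotEquivAnnihilator
        ((H.dualAnnihilator).map (ψ : Module.Dual ℂ V →ₗ[ℂ] V))).finrank_eq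
      have h3 := Submodule.finrank_quotient_add_finrank
        ((H.dualAnnihilator).map (ψ : Module.Dual ℂ V →ₗ[ℂ] V))
      -- careful: annihilator of a subspace of Dual V lives in Dual (Dual V)
      omega
    have heq : H.map χ = ((H.dualAnnihilator).map
        (ψ : Module.Dual ℂ V →ₗ[ℂ] V)).dualAnnihilator :=
      Submodule.eq_of_le_of_finrank_eq hle (by rw [hfr1, hfr2])
    rw [Submodule.map_comp, heq, hinv H hH]
  -- every vector is an eigenvector
  have heig : ∀ v : V, ψ (χ v) ∈ (ℂ ∙ v) := by
    intro v
    rcases eq_or_ne v 0 with rfl | hv0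
    · simp
    obtain ⟨H₁, H₂, h1, h2, hv1, hv2, hinf⟩ := aux_two_subspaces m hm hV hv0
    have e1 : ψ (χ v) ∈ H₁ := by
      have h' : ψ (χ v) ∈ H₁.map ((ψ : Module.Dual ℂ V →ₗ[ℂ] V) ∘ₗ χ) := ⟨v, hv1, rfl⟩
      rwa [hmap H₁ h1] at h'
    have e2 : ψ (χ v) ∈ H₂ := by
      have h' : ψ (χ v) ∈ H₂.map ((ψ : Module.Dual ℂ V →ₗ[ℂ] V) ∘ₗ χ) := ⟨v, hv2, rfl⟩
      rwa [hmap H₂ h2] at h'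
    rw [← hinf]; exact ⟨e1, e2⟩
  -- hence scalar
  have hVnt : ∃ v₀ : V, v₀ ≠ 0 := by
    haveI : Nontrivial V := Module.nontrivial_of_finrank_pos (R := ℂ) (by omega)
    exact exists_ne 0
  obtain ⟨v₀, hv₀⟩ := hVnt
  obtain ⟨c, hc⟩ := Submodule.mem_span_singleton.mp (heig v₀)
  have hA : ∀ v : V, ψ (χ v) = c • v := by
    intro v
    rcases eq_or_ne v 0 with rfl | hv0
    · simp
    obtain ⟨d, hd⟩ := Submodule.mem_span_singleton.mp (heig v)
    by_cases hsp : v ∈ (ℂ ∙ v₀)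
    · obtain ⟨a, rfl⟩ := Submodule.mem_span_singleton.mp hsp
      rw [map_smul, map_smul, ← hc, smul_comm]
    · obtain ⟨e, he⟩ := Submodule.mem_span_singleton.mp (heig (v + v₀))
      have hsum : e • v + e • v₀ = d • v + c • v₀ := by
        rw [← smul_add, he, map_add, map_add, ← hd, ← hc]
      have hed : e = d := by
        by_contra hne
        apply hsp
        have : (e - d) • v = (c - e) • v₀ := by
          rw [sub_smul, sub_smul]
          rw [← sub_eq_zero] at hsum ⊢
          rw [← sub_eq_zero]
          linear_combination (norm := module) hsum
        have hv' : v = ((e - d)⁻¹ * (c - e)) • v₀ := by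
          rw [mul_smul, ← this, smul_smul, inv_mul_cancel₀ (sub_ne_zero.mpr hne), one_smul]
        rw [hv']
        exact Submodule.smul_mem _ _ (Submodule.mem_span_singleton_self v₀)
      have hec : e = c := by
        have h' : (e - c) • v₀ = (d - e) • v := by
          rw [sub_smul, sub_smul]
          linear_combination (norm := module) hsum
        rw [← hed, sub_self, zero_smul] at h'
        rcases smul_eq_zero.mp h' with h | h
        · exact sub_eq_zero.mp h
        · exact absurd h hv₀
      rw [← hd, ← hed, hec]
  -- the bilinear relation
  have hrel : ∀ u v : V, ψ.symm u v = c * ψ.symm v u := by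
    intro u v
    have h1 : χ v = c • ψ.symm v := by
      apply ψ.injective
      rw [hA v, map_smul, ψ.apply_symm_apply]
    calc ψ.symm u v = χ v u := (hχ u v).symm
      _ = (c • ψ.symm v) u := by rw [h1]
      _ = c * ψ.symm v u := rfl
  have hc2 : c ^ 2 = 1 := by
    obtain ⟨f, hf⟩ : ∃ f : Module.Dual ℂ V, f v₀ ≠ 0 := by
      by_contra h
      push_neg at h
      exact hv₀ ((Module.forall_dual_apply_eq_zero_iff (R := ℂ) v₀).mp h)
    have hne : ψ.symm (ψ f) v₀ ≠ 0 := by simpa using hf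
    have := hrel (ψ f) v₀
    rw [hrel v₀ (ψ f)] at this
    have h2 : c ^ 2 * ψ.symm (ψ f) v₀ = 1 * ψ.symm (ψ f) v₀ := by
      rw [one_mul]; linear_combination -this
    exact mul_right_cancel₀ hne h2
  refine ⟨c, hA, hc2, ?_, ?_⟩
  · intro h1 u v
    rw [hrel v u, h1, one_mul]
  · intro h1 u v
    rw [hrel v u, h1, neg_one_mul]
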